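/- Let G be a group, S an additive commutative semigroup, and θ : G → S a surjective function that is a morphism on an arbitrarily large subset of G. Let ψ : G → ℝ be conditionally negative definite and radial with respect to θ, i.e., ψ = ψ̇ ∘ θ for some function ψ̇ : S → ℝ. Then ψ̇ is conditionally negative definite on the semigroup S (for all n, s₁,…,s_n ∈ S and c₁,…,c_n ∈ ℂ with ∑ c_j = 0, ∑_{j,k} c_j \overline{c_k} ψ̇(s_j + s_k) ≤ 0) and bounded below, with ψ̇(s) ≥ ψ(e) for every s ∈ S. -/

import Mathlib

open ComplexOrder

/-- A real-valued function on a group is conditionally negative definite. -/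
def IsCondNegDef {G : Type*} [Group G] (ψ : G → ℝ) : Prop :=
  (∀ g : G, ψ g⁻¹ = ψ g) ∧
    ∀ (n : ℕ) (x : Fin n → G) (c : Fin n → ℂ), (∑ j, c j) = 0 →
      ∑ j, ∑ k, c j * (starRingEnd ℂ) (c k) * (ψ ((x j)⁻¹ * x k) : ℂ) ≤ 0

/-- `θ : G → S` is a morphism on an arbitrarily large subset of `G`. -/
def IsMorphismOnArbLargeSubset {G S : Type*} [Group G] [AddCommSemigroup S]
    (θ : G → S) : Prop :=
  ∀ (N M : ℕ) (s : Fin M → S),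
    ∃ g : Fin N → Fin M → G,
      ∀ (n m : Fin N) (j k : Fin M), n ≠ m → θ ((g n j)⁻¹ * g m k) = s j + s k

/-- A real-valued function on an additive commutative semigroup is conditionally
negative definite in the semigroup sense. -/
def IsCondNegDefSemigroup {S : Type*} [AddCommSemigroup S] (ψ : S → ℝ) : Prop :=
  ∀ (n : ℕ) (s : Fin n → S) (c : Fin n → ℂ), (∑ j, c j) = 0 →
    ∑ j, ∑ k, c j * (starRingEnd ℂ) (c k) * (ψ (s j + s k) : ℂ) ≤ 0

-- auxiliary lemmas

lemma cnd_sum_fintype {G : Type*} [Group G] {ψ : G → ℝ} (hψ : IsCondNegDef ψ)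
    {ι : Type*} [Fintype ι] (x : ι → G) (c : ι → ℂ) (hc : ∑ j, c j = 0) :
    ∑ j, ∑ k, c j * (starRingEnd ℂ) (c k) * (ψ ((x j)⁻¹ * x k) : ℂ) ≤ 0 := by
  classical
  let e := (Fintype.equivFin ι).symm
  have hc' : ∑ j, (c ∘ e) j = 0 := by
    rw [← hc]; exact Equiv.sum_comp e c
  have h := hψ.2 (Fintype.card ι) (x ∘ e) (c ∘ e) hc'
  have key : ∑ j, ∑ k, c j * (starRingEnd ℂ) (c k) * (ψ ((x j)⁻¹ * x k) : ℂ)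
      = ∑ j, ∑ k, (c ∘ e) j * (starRingEnd ℂ) ((c ∘ e) k) *
          (ψ (((x ∘ e) j)⁻¹ * (x ∘ e) k) : ℂ) := by
    rw [← Equiv.sum_comp e (fun j => ∑ k, c j * (starRingEnd ℂ) (c k) * (ψ ((x j)⁻¹ * x k) : ℂ))]
    refine Finset.sum_congr rfl fun a _ => ?_
    exact (Equiv.sum_comp e (fun k => c (e a) * (starRingEnd ℂ) (c k) * (ψ ((x (e a))⁻¹ * x k) : ℂ))).symm
  rw [key]; exact h

lemma real_le_in_complex {a b : ℝ} (h : (a : ℂ) ≤ (b : ℂ)) : a ≤ b := by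
  rwa [Complex.real_le_real] at h

lemma cnd_one_le {G : Type*} [Group G] {ψ : G → ℝ} (hψ : IsCondNegDef ψ) (g : G) :
    ψ 1 ≤ ψ g := by
  have h := hψ.2 2 ![1, g] ![1, -1] (by simp)
  have : ∑ j, ∑ k, (![1, -1] : Fin 2 → ℂ) j * (starRingEnd ℂ) ((![1,-1] : Fin 2 → ℂ) k) *
      (ψ (((![1,g] : Fin 2 → G) j)⁻¹ * (![1,g] : Fin 2 → G) k) : ℂ)
      = ((2 * ψ 1 - 2 * ψ g : ℝ) : ℂ) := by
    simp [Fin.sum_univ_two, hψ.1 g]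
    ring
  rw [this] at h
  have h2 : (2 * ψ 1 - 2 * ψ g : ℝ) ≤ 0 := by
    have := real_le_in_complex (b := 0) (by exact_mod_cast h)
    linarith [this]
  linarith

lemma cnd_upper {G : Type*} [Group G] {ψ : G → ℝ} (hψ : IsCondNegDef ψ) (x y z : G) :
    ψ (x⁻¹ * y) ≤ 2 * ψ (z⁻¹ * x) + 2 * ψ (z⁻¹ * y) - 3 * ψ 1 := by
  have h := hψ.2 3 ![z, x, y] ![-2, 1, 1] (by simp [Fin.sum_univ_three]; norm_num)
  have hxz : ψ (x⁻¹ * z) = ψ (z⁻¹ * x) := by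
    rw [← hψ.1 (x⁻¹ * z)]; simp
  have hyz : ψ (y⁻¹ * z) = ψ (z⁻¹ * y) := by
    rw [← hψ.1 (y⁻¹ * z)]; simp
  have hyx : ψ (y⁻¹ * x) = ψ (x⁻¹ * y) := by
    rw [← hψ.1 (y⁻¹ * x)]; simp
  have key : ∑ j, ∑ k, (![-2,1,1] : Fin 3 → ℂ) j * (starRingEnd ℂ) ((![-2,1,1] : Fin 3 → ℂ) k) *
      (ψ (((![z,x,y] : Fin 3 → G) j)⁻¹ * (![z,x,y] : Fin 3 → G) k) : ℂ)
      = ((6 * ψ 1 - 4 * ψ (z⁻¹*x) - 4 * ψ (z⁻¹*y) + 2 * ψ (x⁻¹*y) : ℝ) : ℂ) := by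
    simp [Fin.sum_univ_three, hxz, hyz, hyx, map_ofNat]
    ring
  rw [key] at h
  have h2 : (6 * ψ 1 - 4 * ψ (z⁻¹*x) - 4 * ψ (z⁻¹*y) + 2 * ψ (x⁻¹*y) : ℝ) ≤ 0 :=
    real_le_in_complex (b := 0) (by exact_mod_cast h)
  linarith

/-- Let `θ : G → S` be surjective and a morphism on an arbitrarily large subset of `G`,
and let `ψ = ψ̇ ∘ θ` be conditionally negative definite on `G`. Then `ψ̇` is
conditionally negative definite on the semigroup `S` and bounded below, with
`ψ̇(s) ≥ ψ(e)` for all `s ∈ S`. -/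
theorem condNegDef_radial_descends_to_semigroup
    {G S : Type*} [Group G] [AddCommSemigroup S]
    (θ : G → S) (hsurj : Function.Surjective θ)
    (hmor : IsMorphismOnArbLargeSubset θ)
    (ψ : G → ℝ) (hψ : IsCondNegDef ψ)
    (ψdot : S → ℝ) (hrad : ∀ g : G, ψ g = ψdot (θ g)) :
    IsCondNegDefSemigroup ψdot ∧ ∀ s : S, ψ 1 ≤ ψdot s := by
  have hbelow : ∀ s : S, ψ 1 ≤ ψdot s := by
    intro s
    obtain ⟨g, rfl⟩ := hsurj s
    rw [← hrad g]
    exact cnd_one_le hψ g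
  refine ⟨?_, hbelow⟩
  intro M s c hc
  rcases M with _ | M
  · simp
  set Q : ℂ := ∑ j, ∑ k, c j * (starRingEnd ℂ) (c k) * (ψdot (s j + s k) : ℂ) with hQ
  -- Q is real
  have hQconj : (starRingEnd ℂ) Q = Q := by
    rw [hQ, map_sum]
    simp_rw [map_sum, map_mul, Complex.conj_conj, Complex.conj_ofReal]
    rw [Finset.sum_comm]
    refine Finset.sum_congr rfl fun k _ => Finset.sum_congr rfl fun j _ => ?_
    rw [add_comm (s j) (s k)]
    ring
  have hQim : Q.im = 0 := Complex.conj_eq_iff_im.mp hQconj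
  -- the constant C
  set i0 : Fin (M + 1) := 0 with hi0
  set C : ℝ := ∑ j, ∑ k, ‖c j‖ * ‖c k‖ *
      (|ψ 1| + |2 * ψdot (s i0 + s j) + 2 * ψdot (s i0 + s k) - 3 * ψ 1|) with hC
  have hkey : ∀ n : ℕ, ((n : ℝ) + 1) * Q.re ≤ C := by
    intro n
    obtain ⟨g, hg⟩ := hmor (n + 2) (M + 1) s
    set F : Fin (n + 2) → Fin (n + 2) → ℂ := fun a b =>
      ∑ j, ∑ k, c j * (starRingEnd ℂ) (c k) * (ψ ((g a j)⁻¹ * g b k) : ℂ) with hF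
    have hT : ∑ a, ∑ b, F a b ≤ 0 := by
      have h := cnd_sum_fintype hψ (ι := Fin (n + 2) × Fin (M + 1))
        (fun p => g p.1 p.2) (fun p => c p.2)
        (by rw [Fintype.sum_prod_type]; simp [hc])
      have heq : ∑ p : Fin (n+2) × Fin (M+1), ∑ q : Fin (n+2) × Fin (M+1),
          c p.2 * (starRingEnd ℂ) (c q.2) * (ψ ((g p.1 p.2)⁻¹ * g q.1 q.2) : ℂ)
          = ∑ a, ∑ b, F a b := by
        simp only [Fintype.sum_prod_type]
        exact Finset.sum_congr rfl fun a _ => Finset.sum_comm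
      rw [heq] at h
      exact h
    have hoff : ∀ a b, a ≠ b → F a b = Q := by
      intro a b hab
      refine Finset.sum_congr rfl fun j _ => Finset.sum_congr rfl fun k _ => ?_
      rw [hrad, hg a b j k hab]
    have hsplit : ∑ a, ∑ b, F a b = ∑ a, F a a + ((n + 2) * (n + 1)) • Q := by
      have h1 : ∀ a : Fin (n + 2), ∑ b, F a b = F a a + (n + 1) • Q := by
        intro a
        rw [← Finset.add_sum_erase _ _ (Finset.mem_univ a)]
        congr 1
        rw [Finset.sum_congr rfl fun b hb => hoff a b (Finset.ne_of_mem_erase hb).symm]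
        rw [Finset.sum_const, Finset.card_erase_of_mem (Finset.mem_univ a),
          Finset.card_univ, Fintype.card_fin]
        congr 1
      simp_rw [h1]
      rw [Finset.sum_add_distrib, Finset.sum_const, Finset.card_univ, Fintype.card_fin,
        smul_smul]
    have hdiag : ∀ a : Fin (n + 2), |(F a a).re| ≤ C := by
      intro a
      obtain ⟨b, hba⟩ : ∃ b : Fin (n + 2), b ≠ a := by
        rcases eq_or_ne a 0 with h | h
        · exact ⟨1, by rw [h]; exact one_ne_zero⟩
        · exact ⟨0, Ne.symm h⟩
      have hre : (F a a).re = ∑ j, ∑ k,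
          (c j * (starRingEnd ℂ) (c k)).re * ψ ((g a j)⁻¹ * g a k) := by
        rw [hF, Complex.re_sum]
        refine Finset.sum_congr rfl fun j _ => ?_
        rw [Complex.re_sum]
        exact Finset.sum_congr rfl fun k _ => by simp [Complex.mul_re]
      rw [hre, hC]
      calc |∑ j, ∑ k, (c j * (starRingEnd ℂ) (c k)).re * ψ ((g a j)⁻¹ * g a k)|
          ≤ ∑ j, |∑ k, (c j * (starRingEnd ℂ) (c k)).re * ψ ((g a j)⁻¹ * g a k)| :=
            Finset.abs_sum_le_sum_abs _ _
        _ ≤ ∑ j, ∑ k, |(c j * (starRingEnd ℂ) (c k)).re * ψ ((g a j)⁻¹ * g a k)| :=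
            Finset.sum_le_sum fun j _ => Finset.abs_sum_le_sum_abs _ _
        _ ≤ ∑ j, ∑ k, ‖c j‖ * ‖c k‖ *
            (|ψ 1| + |2 * ψdot (s i0 + s j) + 2 * ψdot (s i0 + s k) - 3 * ψ 1|) := by
          refine Finset.sum_le_sum fun j _ => Finset.sum_le_sum fun k _ => ?_
          rw [abs_mul]
          have h1 : |(c j * (starRingEnd ℂ) (c k)).re| ≤ ‖c j‖ * ‖c k‖ := by
            calc |(c j * (starRingEnd ℂ) (c k)).re| ≤ ‖c j * (starRingEnd ℂ) (c k)‖ :=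
                  Complex.abs_re_le_norm _
              _ = ‖c j‖ * ‖c k‖ := by rw [norm_mul, Complex.norm_conj]
          have h2 : |ψ ((g a j)⁻¹ * g a k)| ≤
              |ψ 1| + |2 * ψdot (s i0 + s j) + 2 * ψdot (s i0 + s k) - 3 * ψ 1| := by
            have hlb := cnd_one_le hψ ((g a j)⁻¹ * g a k)
            have hub := cnd_upper hψ (g a j) (g a k) (g b i0)
            rw [hrad ((g b i0)⁻¹ * g a j), hrad ((g b i0)⁻¹ * g a k),
              hg b a i0 j hba, hg b a i0 k hba] at hub
            rw [abs_le]
            constructor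
            · linarith [neg_abs_le (ψ 1),
                abs_nonneg (2 * ψdot (s i0 + s j) + 2 * ψdot (s i0 + s k) - 3 * ψ 1)]
            · linarith [le_abs_self (2 * ψdot (s i0 + s j) + 2 * ψdot (s i0 + s k) - 3 * ψ 1),
                abs_nonneg (ψ 1)]
          exact mul_le_mul h1 h2 (abs_nonneg _) (by positivity)
    -- combine
    have hTre : (∑ a, ∑ b, F a b).re ≤ 0 := by
      have := (Complex.le_def.mp hT).1
      simpa using this
    rw [hsplit] at hTre
    have hre2 : (∑ a, F a a).re + ((n + 2) * (n + 1) : ℝ) * Q.re ≤ 0 := by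
      have : ((((n+2)*(n+1) : ℕ)) • Q).re = (((n+2)*(n+1) : ℕ) : ℝ) * Q.re := by
        rw [nsmul_eq_mul]
        simp [Complex.mul_re]
      rw [Complex.add_re, this] at hTre
      push_cast at hTre ⊢
      linarith
    have hsum_lb : -((n + 2 : ℝ) * C) ≤ (∑ a, F a a).re := by
      rw [Complex.re_sum]
      calc -((n + 2 : ℝ) * C) = ∑ _a : Fin (n+2), -C := by
            simp [Finset.sum_const]
        _ ≤ ∑ a, (F a a).re :=
            Finset.sum_le_sum fun a _ => neg_le_of_abs_le (hdiag a)
    have hC0 : 0 ≤ C := by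
      rw [hC]
      refine Finset.sum_nonneg fun j _ => Finset.sum_nonneg fun k _ => ?_
      positivity
    have hn2 : (0:ℝ) < n + 2 := by positivity
    nlinarith [hre2, hsum_lb]
  -- conclude Q.re ≤ 0
  have hQre : Q.re ≤ 0 := by
    by_contra hpos
    push_neg at hpos
    obtain ⟨n, hn⟩ := exists_nat_gt (C / Q.re)
    have h1 := hkey n
    have h2 : C / Q.re < (n : ℝ) + 1 := by linarith
    rw [div_lt_iff₀ hpos] at h2
    linarith
  rw [Complex.le_def]
  constructor
  · simpa using hQre
  · simpa using hQim
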